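/- Let (y, z, θ) solve the translator system with μ = 0, λ ≠ 0 and f(θ₀) ≠ 0, where f(θ) = −(θ − θ₀ + λ)·sin θ. Then z is bounded from below on ℝ; moreover z(s) → +∞ as s → +∞ if and only if θ(s) → θ₀ − λ as s → +∞, and if this fails then z(s) converges to a finite limit as s → +∞. The same dichotomy holds as s → −∞. -/

import Mathlib

open Real Filter Topology

private lemma mono_conv_atTop {f : ℝ → ℝ} (hm : Monotone f) (h : ¬ Tendsto f atTop atTop) :
    ∃ L, Tendsto f atTop (𝓝 L) := by
  by_cases hb : BddAbove (Set.range f)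
  · exact ⟨_, tendsto_atTop_ciSup hm hb⟩
  · exact absurd (tendsto_atTop_atTop_of_monotone' hm hb) h

private lemma anti_conv_atBot {f : ℝ → ℝ} (hm : Antitone f) (h : ¬ Tendsto f atBot atTop) :
    ∃ L, Tendsto f atBot (𝓝 L) := by
  by_cases hb : BddAbove (Set.range f)
  · exact ⟨_, tendsto_atBot_ciSup hm hb⟩
  · exfalso
    apply h
    have hb' : ¬ BddBelow (Set.range fun s => -f s) := by
      rintro ⟨m, hm'⟩
      exact hb ⟨-m, by rintro x ⟨a, rfl⟩; have := hm' ⟨a, rfl⟩; dsimp at this; linarith⟩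
    have := tendsto_atBot_atBot_of_monotone'
      (u := fun s => -f s) (fun a b hab => neg_le_neg (hm hab)) hb'
    exact tendsto_neg_atBot_iff.mp this

theorem stmt11
    (lam μ θ₀ : ℝ) (y z θ : ℝ → ℝ)
    (hy0 : y 0 = 0) (hz0 : z 0 = 0) (hθ0 : θ 0 = θ₀)
    (hy : ∀ s : ℝ, HasDerivAt y (Real.exp (z s) * Real.cos (θ s)) s)
    (hz : ∀ s : ℝ, HasDerivAt z (Real.sin (θ s)) s)
    (hθ : ∀ s : ℝ, HasDerivAt θ
      (-lam * Real.exp (-z s) * Real.sin (θ s) +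
        μ * (Real.cos (θ s) - y s * Real.exp (-z s) * Real.sin (θ s))) s)
    (hμ : μ = 0) (hlam : lam ≠ 0)
    (hne : μ * Real.cos θ₀ - (θ₀ - θ₀ + lam) * Real.sin θ₀ ≠ 0) :
    (∃ m : ℝ, ∀ s : ℝ, m ≤ z s) ∧
    (Tendsto z atTop atTop ↔ Tendsto θ atTop (𝓝 (θ₀ - lam))) ∧
    (¬ Tendsto θ atTop (𝓝 (θ₀ - lam)) → ∃ L : ℝ, Tendsto z atTop (𝓝 L)) ∧
    (Tendsto z atBot atTop ↔ Tendsto θ atBot (𝓝 (θ₀ - lam))) ∧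
    (¬ Tendsto θ atBot (𝓝 (θ₀ - lam)) → ∃ L : ℝ, Tendsto z atBot (𝓝 L)) := by
  subst hμ
  simp only [zero_mul, add_zero] at hθ
  have hsin0 : Real.sin θ₀ ≠ 0 := by
    intro h
    apply hne
    simp [h]
  have hθc : Continuous θ := by
    have : Differentiable ℝ θ := fun s => (hθ s).differentiableAt
    exact this.continuous
  -- conserved quantity : θ - lam * exp (-z) = θ₀ - lam
  have hexp : ∀ s, HasDerivAt (fun t => Real.exp (-z t))
      (Real.exp (-z s) * (-Real.sin (θ s))) s := by
    intro s
    simpa using ((hz s).neg).exp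
  have hFconst : ∀ s, θ s - lam * Real.exp (-z s) = θ₀ - lam := by
    have hF : ∀ s, HasDerivAt (fun t => θ t - lam * Real.exp (-z t)) 0 s := by
      intro s
      have h1 := (hθ s).sub (HasDerivAt.const_mul lam (hexp s))
      refine h1.congr_deriv ?_
      ring
    intro s
    have h2 := is_const_of_deriv_eq_zero (fun t => (hF t).differentiableAt)
      (fun t => (hF t).deriv) s 0
    rw [hz0, hθ0] at h2
    simpa using h2
  have hid : ∀ s, θ s = θ₀ - lam + lam * Real.exp (-z s) := fun s => by
    linarith [hFconst s]
  -- forward: z → +∞ ⟹ θ → θ₀ - lam (along any filter)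
  have fwd : ∀ l : Filter ℝ, Tendsto z l atTop → Tendsto θ l (𝓝 (θ₀ - lam)) := by
    intro l hl
    have h1 : Tendsto (fun s => Real.exp (-z s)) l (𝓝 0) :=
      Real.tendsto_exp_atBot.comp (tendsto_neg_atTop_atBot.comp hl)
    have h2 : Tendsto (fun s => θ₀ - lam + lam * Real.exp (-z s)) l
        (𝓝 (θ₀ - lam + lam * 0)) := tendsto_const_nhds.add (h1.const_mul lam)
    rw [mul_zero, add_zero] at h2
    have : θ = fun s => θ₀ - lam + lam * Real.exp (-z s) := funext hid
    rw [this]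
    exact h2
  -- backward: θ → θ₀ - lam ⟹ z → +∞ (along any filter)
  have bwd : ∀ l : Filter ℝ, Tendsto θ l (𝓝 (θ₀ - lam)) → Tendsto z l atTop := by
    intro l hl
    have h1 : Tendsto (fun s => Real.exp (-z s)) l (𝓝 0) := by
      have h0 : Tendsto (fun s => (θ s - (θ₀ - lam)) / lam) l
          (𝓝 ((θ₀ - lam - (θ₀ - lam)) / lam)) := (hl.sub_const _).div_const lam
      have heq : (fun s => (θ s - (θ₀ - lam)) / lam)
          = fun s => Real.exp (-z s) := by
        funext s
        field_simp
        linarith [hFconst s]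
      rw [heq] at h0
      simpa using h0
    have h3 : Tendsto (fun s => Real.exp (-z s)) l (𝓝[>] 0) :=
      tendsto_nhdsWithin_iff.mpr ⟨h1, Filter.Eventually.of_forall fun s => Real.exp_pos _⟩
    have h4 := Real.tendsto_log_nhdsGT_zero.comp h3
    have h5 : Tendsto (fun s => -z s) l atBot := by
      have heq : (fun s => Real.log (Real.exp (-z s))) = fun s => -z s := by
        funext s; exact Real.log_exp _
      rw [show (Real.log ∘ fun s => Real.exp (-z s)) = fun s => Real.log (Real.exp (-z s))
        from rfl, heq] at h4
      exact h4
    exact tendsto_neg_atBot_iff.mp h5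
  -- the sign of sin (θ s) is constant
  set c : ℝ → ℝ := fun s => -Real.cos (θ s) * (θ s - θ₀ + lam) with hc_def
  have hc : Continuous c := by
    apply Continuous.mul
    · exact (Real.continuous_cos.comp hθc).neg
    · exact (hθc.sub continuous_const).add continuous_const
  set C : ℝ → ℝ := fun s => ∫ t in (0:ℝ)..s, c t with hC_def
  have hC : ∀ s, HasDerivAt C (c s) s := fun s =>
    intervalIntegral.integral_hasDerivAt_right (hc.intervalIntegrable _ _)
      hc.stronglyMeasurable.stronglyMeasurableAtFilter hc.continuousAt
  have hsgn : ∀ s, Real.sin (θ s) = Real.sin θ₀ * Real.exp (C s) := by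
    have hg : ∀ s, HasDerivAt (fun t => Real.sin (θ t) * Real.exp (-C t)) 0 s := by
      intro s
      have h1 := ((hθ s).sin).mul (((hC s).neg).exp)
      refine h1.congr_deriv ?_
      have hlamz : lam * Real.exp (-z s) = θ s - θ₀ + lam := by linarith [hFconst s]
      simp only [hc_def]
      linear_combination (-(Real.cos (θ s) * Real.sin (θ s) * Real.exp (-C s))) * hlamz
    intro s
    have h0 := is_const_of_deriv_eq_zero (fun t => (hg t).differentiableAt)
      (fun t => (hg t).deriv) s 0
    have hC0 : C 0 = 0 := intervalIntegral.integral_same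
    rw [hθ0, hC0] at h0
    simp only [neg_zero, Real.exp_zero, mul_one] at h0
    calc Real.sin (θ s) = Real.sin (θ s) * Real.exp (-C s) * Real.exp (C s) := by
          rw [mul_assoc, ← Real.exp_add]; simp
      _ = Real.sin θ₀ * Real.exp (C s) := by rw [h0]
  have hsne : ∀ s, Real.sin (θ s) ≠ 0 := fun s => by
    rw [hsgn s]; exact mul_ne_zero hsin0 (Real.exp_ne_zero _)
  -- θ stays in the band (kπ, (k+1)π)
  have hπ := Real.pi_pos
  set k : ℤ := ⌊θ₀ / Real.pi⌋ with hk
  have hθ₀lb : (k : ℝ) * Real.pi < θ₀ := by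
    have h1 : (k : ℝ) ≤ θ₀ / Real.pi := Int.floor_le _
    have h2 : (k : ℝ) * Real.pi ≤ θ₀ := by
      rw [← le_div_iff₀ hπ]; exact h1
    rcases h2.lt_or_eq with h | h
    · exact h
    · exact absurd (by rw [← h]; exact Real.sin_int_mul_pi k) hsin0
  have hθ₀ub : θ₀ < ((k : ℝ) + 1) * Real.pi := by
    have h1 : θ₀ / Real.pi < (k : ℝ) + 1 := Int.lt_floor_add_one _
    rw [← div_lt_iff₀ hπ]; exact h1
  have hsink1 : Real.sin (((k : ℝ) + 1) * Real.pi) = 0 := by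
    have := Real.sin_int_mul_pi (k + 1)
    push_cast at this
    exact this
  have hband : ∀ s, (k : ℝ) * Real.pi < θ s ∧ θ s < ((k : ℝ) + 1) * Real.pi := by
    intro s
    constructor
    · by_contra h
      push_neg at h
      have hmem : (k : ℝ) * Real.pi ∈ Set.uIcc (θ 0) (θ s) := by
        rw [hθ0]
        exact Set.mem_uIcc.mpr (Or.inr ⟨h, hθ₀lb.le⟩)
      obtain ⟨t, _, ht⟩ := intermediate_value_uIcc hθc.continuousOn hmem
      exact hsne t (by rw [ht]; exact Real.sin_int_mul_pi k)
    · by_contra h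
      push_neg at h
      have hmem : ((k : ℝ) + 1) * Real.pi ∈ Set.uIcc (θ 0) (θ s) := by
        rw [hθ0]
        exact Set.mem_uIcc.mpr (Or.inl ⟨hθ₀ub.le, h⟩)
      obtain ⟨t, _, ht⟩ := intermediate_value_uIcc hθc.continuousOn hmem
      exact hsne t (by rw [ht]; exact hsink1)
  -- uniform lower bound for z
  set R : ℝ := |(k : ℝ) * Real.pi| + |((k : ℝ) + 1) * Real.pi| + |θ₀| + |lam| with hR
  have hlabs : 0 < |lam| := abs_pos.mpr hlam
  have hMb : ∀ s, Real.exp (-z s) ≤ R / |lam| := by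
    intro s
    have h1 : lam * Real.exp (-z s) = θ s - θ₀ + lam := by linarith [hFconst s]
    have h2 : |lam| * Real.exp (-z s) = |θ s - θ₀ + lam| := by
      rw [← Real.abs_exp (-z s), ← abs_mul, h1]
    have h3 : |θ s - θ₀ + lam| ≤ R := by
      obtain ⟨hl, hr⟩ := hband s
      have t1 := le_abs_self ((k : ℝ) * Real.pi)
      have t2 := neg_abs_le ((k : ℝ) * Real.pi)
      have t3 := le_abs_self (((k : ℝ) + 1) * Real.pi)
      have t4 := neg_abs_le (((k : ℝ) + 1) * Real.pi)
      have t5 := le_abs_self θ₀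
      have t6 := neg_abs_le θ₀
      have t7 := le_abs_self lam
      have t8 := neg_abs_le lam
      rw [hR]
      rw [abs_le]
      constructor <;> linarith
    rw [le_div_iff₀ hlabs]
    calc Real.exp (-z s) * |lam| = |lam| * Real.exp (-z s) := mul_comm _ _
      _ = |θ s - θ₀ + lam| := h2
      _ ≤ R := h3
  have hzlb : ∀ s, -(Real.log (R / |lam|)) ≤ z s := by
    intro s
    have hM : 0 < R / |lam| := lt_of_lt_of_le (Real.exp_pos _) (hMb s)
    have := (Real.le_log_iff_exp_le hM).mpr (hMb s)
    linarith
  -- monotonicity of z and convergence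
  have hbdd : BddBelow (Set.range z) := ⟨_, by rintro x ⟨s, rfl⟩; exact hzlb s⟩
  have hconv : (¬ Tendsto z atTop atTop → ∃ L, Tendsto z atTop (𝓝 L)) ∧
      (¬ Tendsto z atBot atTop → ∃ L, Tendsto z atBot (𝓝 L)) := by
    rcases hsin0.lt_or_gt with hneg | hpos
    · have hanti : Antitone z := by
        have : StrictAnti z := strictAnti_of_deriv_neg fun x => by
          rw [(hz x).deriv, hsgn x]
          exact mul_neg_of_neg_of_pos hneg (Real.exp_pos _)
        exact this.antitone
      exact ⟨fun _ => ⟨_, tendsto_atTop_ciInf hanti hbdd⟩,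
        fun h => anti_conv_atBot hanti h⟩
    · have hmono : Monotone z := by
        have : StrictMono z := strictMono_of_deriv_pos fun x => by
          rw [(hz x).deriv, hsgn x]
          exact mul_pos hpos (Real.exp_pos _)
        exact this.monotone
      exact ⟨fun h => mono_conv_atTop hmono h,
        fun _ => ⟨_, tendsto_atBot_ciInf hmono hbdd⟩⟩
  exact ⟨⟨-(Real.log (R / |lam|)), hzlb⟩,
    ⟨fwd atTop, bwd atTop⟩,
    fun h => hconv.1 fun hz' => h (fwd atTop hz'),
    ⟨fwd atBot, bwd atBot⟩,
    fun h => hconv.2 fun hz' => h (fwd atBot hz')⟩
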